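/- arXiv:2605.30220 — 3 statements merged into one kernel-verified Lean document; each statement's English description precedes it below -/
import Mathlib

section
/- Let Z ⊂ ℝ^d be a circuit with Radon partition (Z⁺, Z⁻), and let x be the Radon point of Z (the point in conv(Z⁺) ∩ conv(Z⁻) given by the affine dependence). Then for any p ∈ Z⁺ and q ∈ Z⁻, x does not lie in conv(Z \ {p, q}). -/
open Finset

open scoped Classical

variable {d : ℕ}

/-- An affine dependence on the finite point set `Z` with coefficients `l`:
the coefficients sum to zero, the weighted points sum to zero, and not all
coefficients vanish on `Z`. -/
def AffDepOn (Z : Finset (Fin d → ℝ)) (l : (Fin d → ℝ) → ℝ) : Prop :=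
  (∑ p ∈ Z, l p • p) = 0 ∧ (∑ p ∈ Z, l p) = 0 ∧ ∃ p ∈ Z, l p ≠ 0

/-- `Z` is affinely dependent. -/
def AffDep (Z : Finset (Fin d → ℝ)) : Prop := ∃ l, AffDepOn Z l

/-- A circuit: a minimal affinely dependent finite set. -/
def IsCircuit (Z : Finset (Fin d → ℝ)) : Prop :=
  AffDep Z ∧ ∀ Y : Finset (Fin d → ℝ), Y ⊂ Z → ¬ AffDep Y

/-- Positive part of the Radon partition induced by coefficients `l`. -/
noncomputable def posPart (Z : Finset (Fin d → ℝ)) (l : (Fin d → ℝ) → ℝ) : Finset (Fin d → ℝ) :=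
  Z.filter fun p => 0 < l p

/-- Negative part of the Radon partition induced by coefficients `l`. -/
noncomputable def negPart (Z : Finset (Fin d → ℝ)) (l : (Fin d → ℝ) → ℝ) : Finset (Fin d → ℝ) :=
  Z.filter fun p => l p < 0

/-- The Radon point `x = ∑_{p ∈ Z⁺} (λ_p / Λ) p`, where `Λ = ∑_{p ∈ Z⁺} λ_p`. -/
noncomputable def radonPoint (Z : Finset (Fin d → ℝ)) (l : (Fin d → ℝ) → ℝ) : Fin d → ℝ :=
  ∑ r ∈ posPart Z l, (l r / ∑ s ∈ posPart Z l, l s) • r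

theorem radon_point_not_in_hull_of_two_removed
    (Z : Finset (Fin d → ℝ)) (hZ : IsCircuit Z)
    (l : (Fin d → ℝ) → ℝ) (hl : AffDepOn Z l) (hne : ∀ p ∈ Z, l p ≠ 0)
    (p q : Fin d → ℝ) (hp : p ∈ posPart Z l) (hq : q ∈ negPart Z l) :
    radonPoint Z l ∉ convexHull ℝ (↑(Z \ {p, q}) : Set (Fin d → ℝ)) := by
  intro hx
  rw [Finset.convexHull_eq] at hx
  obtain ⟨w, hw0, hw1, hwx⟩ := hx
  rw [Finset.centerMass_eq_of_sum_1 _ _ hw1] at hwx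
  simp only [id] at hwx
  obtain ⟨hpZ, hlp⟩ := Finset.mem_filter.mp hp
  obtain ⟨hqZ, hlq⟩ := Finset.mem_filter.mp hq
  set Λ : ℝ := ∑ s ∈ posPart Z l, l s with hΛdef
  have hΛpos : 0 < Λ := by
    apply Finset.sum_pos
    · intro r hr; exact (Finset.mem_filter.mp hr).2
    · exact ⟨p, hp⟩
  have hpq : p ≠ q := fun h => absurd (h ▸ hlp) (asymm hlq)
  set S : Finset (Fin d → ℝ) := Z \ {p, q} with hS
  have hSZ : S ⊆ Z := Finset.sdiff_subset
  set ν : (Fin d → ℝ) → ℝ := fun r =>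
    (if 0 < l r then l r / Λ else 0) - (if r ∈ S then w r else 0) with hν
  have hνq : ν q = 0 := by
    have hqS : q ∉ S := by simp [hS]
    simp [hν, hqS, not_lt.mpr (le_of_lt hlq)]
  have hνp : ν p = l p / Λ := by
    have hpS : p ∉ S := by simp [hS]
    simp [hν, hpS, hlp]
  -- sums over Z
  have hsum1 : ∑ r ∈ Z, (if 0 < l r then l r / Λ else 0) • r = radonPoint Z l := by
    simp only [ite_smul, zero_smul]
    rw [← Finset.sum_filter]
    rfl
  have hsum2 : ∑ r ∈ Z, (if r ∈ S then w r else 0) • r = radonPoint Z l := by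
    rw [← hwx]
    simp only [ite_smul, zero_smul]
    rw [Finset.sum_ite_mem, Finset.inter_eq_right.mpr hSZ]
  have hsum3 : ∑ r ∈ Z, (if 0 < l r then l r / Λ else 0) = 1 := by
    rw [← Finset.sum_filter, ← Finset.sum_div]
    exact div_self (ne_of_gt hΛpos)
  have hsum4 : ∑ r ∈ Z, (if r ∈ S then w r else 0) = 1 := by
    rw [Finset.sum_ite_mem, Finset.inter_eq_right.mpr hSZ]; exact hw1
  have hdep : AffDepOn (Z.erase q) ν := by
    refine ⟨?_, ?_, ⟨p, Finset.mem_erase.mpr ⟨hpq, hpZ⟩, ?_⟩⟩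
    · have : ∑ r ∈ Z.erase q, ν r • r = ∑ r ∈ Z, ν r • r := by
        apply Finset.sum_subset (Finset.erase_subset _ _)
        intro r hr hr'
        have : r = q := by
          by_contra h; exact hr' (Finset.mem_erase.mpr ⟨h, hr⟩)
        rw [this, hνq, zero_smul]
      rw [this]
      simp only [hν, sub_smul, Finset.sum_sub_distrib, hsum1, hsum2, sub_self]
    · have : ∑ r ∈ Z.erase q, ν r = ∑ r ∈ Z, ν r := by
        apply Finset.sum_subset (Finset.erase_subset _ _)
        intro r hr hr'
        have : r = q := by
          by_contra h; exact hr' (Finset.mem_erase.mpr ⟨h, hr⟩)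
        rw [this, hνq]
      rw [this]
      simp only [hν, Finset.sum_sub_distrib, hsum3, hsum4, sub_self]
    · rw [hνp]
      positivity
  exact hZ.2 _ (Finset.erase_ssubset hqZ) ⟨ν, hdep⟩
end

section
/- Let V be a finite point set in ℝ^d and let Δ be a geometric triangulation of conv(V) using vertices from V, viewed as a set of (d+1)-element vertex subsets of V whose simplices are full-dimensional, have pairwise intersections that are common faces, and whose union is conv(V). Suppose a circuit Z ⊆ V has its positive local triangulation realized, i.e., every set Z\{p} with p ∈ Z⁺ is contained in some member of Δ. Then the negative local triangulation is not realized: there exists q ∈ Z⁻ such that Z\{q} is not contained in any member of Δ. -/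
open Finset

open scoped Classical

variable {d : ℕ}

theorem realized_positive_side_excludes_negative_side
    (d : ℕ) (V : Finset (Fin d → ℝ)) (Δ : Finset (Finset (Fin d → ℝ)))
    (hsimp : ∀ S ∈ Δ, S ⊆ V ∧ S.card = d + 1 ∧ ¬ AffDep S)
    (hface : ∀ S ∈ Δ, ∀ T ∈ Δ,
      convexHull ℝ (↑S : Set (Fin d → ℝ)) ∩ convexHull ℝ (↑T : Set (Fin d → ℝ)) =
        convexHull ℝ (↑(S ∩ T) : Set (Fin d → ℝ)))
    (hcover : (⋃ S ∈ Δ, convexHull ℝ (↑S : Set (Fin d → ℝ))) =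
        convexHull ℝ (↑V : Set (Fin d → ℝ)))
    (Z : Finset (Fin d → ℝ)) (hZV : Z ⊆ V) (hZ : IsCircuit Z)
    (l : (Fin d → ℝ) → ℝ) (hl : AffDepOn Z l) (hne : ∀ p ∈ Z, l p ≠ 0)
    (hrealized : ∀ p ∈ posPart Z l, ∃ S ∈ Δ, Z.erase p ⊆ S) :
    ∃ q ∈ negPart Z l, ∀ T ∈ Δ, ¬ Z.erase q ⊆ T := by
  classical
  obtain ⟨hsum0, hcoef0, p0, hp0Z, hp0ne⟩ := hl
  set P := posPart Z l with hP
  set N := negPart Z l with hN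
  have hPZ : P ⊆ Z := Finset.filter_subset _ _
  have hNZ : N ⊆ Z := Finset.filter_subset _ _
  have hZne : Z.Nonempty := ⟨p0, hp0Z⟩
  have hparts : P ∪ N = Z := by
    ext a
    constructor
    · intro h
      rcases Finset.mem_union.mp h with h | h
      · exact hPZ h
      · exact hNZ h
    · intro ha
      rcases lt_or_gt_of_ne (hne a ha) with h | h
      · exact Finset.mem_union_right _ (Finset.mem_filter.mpr ⟨ha, h⟩)
      · exact Finset.mem_union_left _ (Finset.mem_filter.mpr ⟨ha, h⟩)
  have hdisj : Disjoint P N := by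
    rw [Finset.disjoint_left]
    intro a ha ha'
    have h1 : 0 < l a := (Finset.mem_filter.mp ha).2
    have h2 : l a < 0 := (Finset.mem_filter.mp ha').2
    linarith
  have hPne : P.Nonempty := by
    rw [Finset.nonempty_iff_ne_empty]
    intro h
    have hNZ' : N = Z := by rw [← hparts, h, Finset.empty_union]
    have hlt : (∑ x ∈ Z, l x) < 0 := by
      refine Finset.sum_neg (fun x hx => ?_) hZne
      have : x ∈ N := hNZ' ▸ hx
      exact (Finset.mem_filter.mp this).2
    linarith
  have hNne : N.Nonempty := by
    rw [Finset.nonempty_iff_ne_empty]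
    intro h
    have hPZ' : P = Z := by rw [← hparts, h, Finset.union_empty]
    have hlt : 0 < (∑ x ∈ Z, l x) := by
      refine Finset.sum_pos (fun x hx => ?_) hZne
      have : x ∈ P := hPZ' ▸ hx
      exact (Finset.mem_filter.mp this).2
    linarith
  set Λ := ∑ r ∈ P, l r with hΛ
  have hΛpos : 0 < Λ := Finset.sum_pos (fun r hr => (Finset.mem_filter.mp hr).2) hPne
  have hNsum : ∑ r ∈ N, l r = -Λ := by
    have h := hcoef0
    rw [← hparts, Finset.sum_union hdisj] at h
    linarith
  have hsplitv : ∑ r ∈ P, (l r) • r + ∑ r ∈ N, (l r) • r = 0 := by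
    rw [← Finset.sum_union hdisj, hparts]; exact hsum0
  have hPv : ∑ r ∈ P, (l r) • r = -∑ r ∈ N, (l r) • r :=
    eq_neg_of_add_eq_zero_left hsplitv
  set x := radonPoint Z l with hx
  have hxpos : x = ∑ r ∈ P, (l r / Λ) • r := rfl
  have hxneg : x = ∑ r ∈ N, (-l r / Λ) • r := by
    rw [hxpos]
    calc ∑ r ∈ P, (l r / Λ) • r = Λ⁻¹ • ∑ r ∈ P, (l r) • r := by
          rw [Finset.smul_sum]
          exact Finset.sum_congr rfl fun r _ => by rw [smul_smul, div_eq_inv_mul]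
      _ = Λ⁻¹ • ∑ r ∈ N, (-l r) • r := by
          rw [hPv, ← Finset.sum_neg_distrib]
          congr 1
          exact Finset.sum_congr rfl fun r _ => (neg_smul _ _).symm
      _ = ∑ r ∈ N, (-l r / Λ) • r := by
          rw [Finset.smul_sum]
          exact Finset.sum_congr rfl fun r _ => by rw [smul_smul, div_eq_inv_mul]
  have hsum1N : ∑ r ∈ N, (-l r / Λ) = 1 := by
    have h : ∑ r ∈ N, (-l r / Λ) = (-(∑ r ∈ N, l r)) / Λ := by
      rw [← Finset.sum_neg_distrib, Finset.sum_div]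
    rw [h, hNsum, neg_neg, div_self hΛpos.ne']
  have hsum1P : ∑ r ∈ P, (l r / Λ) = 1 := by
    rw [← Finset.sum_div, ← hΛ, div_self hΛpos.ne']
  -- membership lemmas
  have hmemS : ∀ S : Finset (Fin d → ℝ), N ⊆ S → x ∈ convexHull ℝ (↑S : Set (Fin d → ℝ)) := by
    intro S hNS
    have hm := Finset.centerMass_mem_convexHull (s := (↑S : Set (Fin d → ℝ))) N
      (w := fun r => -l r / Λ)
      (fun r hr => by
        have hlr : l r < 0 := (Finset.mem_filter.mp hr).2
        have : 0 < -l r := by linarith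
        positivity)
      (by rw [hsum1N]; norm_num)
      (z := id) (fun r hr => Finset.mem_coe.mpr (hNS hr))
    rw [Finset.centerMass_eq_of_sum_1 _ _ hsum1N] at hm
    simp only [id_eq] at hm
    rwa [← hxneg] at hm
  have hmemT : ∀ T : Finset (Fin d → ℝ), P ⊆ T → x ∈ convexHull ℝ (↑T : Set (Fin d → ℝ)) := by
    intro T hPT
    have hm := Finset.centerMass_mem_convexHull (s := (↑T : Set (Fin d → ℝ))) P
      (w := fun r => l r / Λ)
      (fun r hr => by
        have hlr : 0 < l r := (Finset.mem_filter.mp hr).2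
        positivity)
      (by rw [hsum1P]; norm_num)
      (z := id) (fun r hr => Finset.mem_coe.mpr (hPT hr))
    rw [Finset.centerMass_eq_of_sum_1 _ _ hsum1P] at hm
    simp only [id_eq] at hm
    rwa [← hxpos] at hm
  -- helper sums
  have hsum_ite : ∀ (s t : Finset (Fin d → ℝ)) (f : (Fin d → ℝ) → ℝ), t ⊆ s →
      ∑ y ∈ s, (if y ∈ t then f y else 0) • y = ∑ y ∈ t, (f y) • y := by
    intro s t f hts
    have h : ∀ y ∈ s, (if y ∈ t then f y else 0) • y = if y ∈ t then (f y) • y else 0 :=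
      fun y _ => by split <;> simp
    rw [Finset.sum_congr rfl h, Finset.sum_ite_mem, Finset.inter_eq_right.mpr hts]
  have hsum_ite' : ∀ (s t : Finset (Fin d → ℝ)) (f : (Fin d → ℝ) → ℝ), t ⊆ s →
      (∑ y ∈ s, if y ∈ t then f y else 0) = ∑ y ∈ t, f y := by
    intro s t f hts
    rw [Finset.sum_ite_mem, Finset.inter_eq_right.mpr hts]
  -- main argument
  obtain ⟨p, hp⟩ := hPne
  obtain ⟨S, hSΔ, hpS⟩ := hrealized p hp
  have hNS : N ⊆ S := by
    intro r hr
    refine hpS (Finset.mem_erase.mpr ⟨fun h => ?_, hNZ hr⟩)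
    exact (Finset.disjoint_left.mp hdisj hp) (h ▸ hr)
  by_contra hcon
  push_neg at hcon
  obtain ⟨q, hq⟩ := hNne
  obtain ⟨T, hTΔ, hqT⟩ := hcon q hq
  have hPT : P ⊆ T := by
    intro r hr
    refine hqT (Finset.mem_erase.mpr ⟨fun h => ?_, hPZ hr⟩)
    exact (Finset.disjoint_left.mp hdisj hr) (h ▸ hq)
  have hxST : x ∈ convexHull ℝ (↑(S ∩ T) : Set (Fin d → ℝ)) := by
    rw [← hface S hSΔ T hTΔ]
    exact ⟨hmemS S hNS, hmemT T hPT⟩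
  have hqnT : q ∉ T := by
    intro hqT'
    have hZT : Z ⊆ T := by
      intro y hy
      by_cases hyq : y = q
      · exact hyq ▸ hqT'
      · exact hqT (Finset.mem_erase.mpr ⟨hyq, hy⟩)
    apply (hsimp T hTΔ).2.2
    refine ⟨fun y => if y ∈ Z then l y else 0, ?_, ?_, ⟨p0, hZT hp0Z, by simp [hp0Z, hp0ne]⟩⟩
    · rw [hsum_ite T Z l hZT]; exact hsum0
    · rw [hsum_ite' T Z l hZT]; exact hcoef0
  rw [Finset.convexHull_eq] at hxST
  obtain ⟨w, hw0, hw1, hwx⟩ := hxST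
  have hwx' : ∑ y ∈ S ∩ T, (w y) • y = x := by
    rw [← hwx, Finset.centerMass_eq_of_sum_1 _ _ hw1]
    simp
  apply (hsimp S hSΔ).2.2
  refine ⟨fun y => (if y ∈ N then -l y / Λ else 0) - (if y ∈ S ∩ T then w y else 0),
    ?_, ?_, ⟨q, hNS hq, ?_⟩⟩
  · have h : ∀ y ∈ S, ((if y ∈ N then -l y / Λ else 0) - (if y ∈ S ∩ T then w y else 0)) • y
        = (if y ∈ N then -l y / Λ else 0) • y - (if y ∈ S ∩ T then w y else 0) • y :=
      fun y _ => sub_smul _ _ _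
    rw [Finset.sum_congr rfl h, Finset.sum_sub_distrib,
      hsum_ite S N _ hNS, hsum_ite S (S ∩ T) _ Finset.inter_subset_left,
      ← hxneg, hwx', sub_self]
  · rw [Finset.sum_sub_distrib, hsum_ite' S N _ hNS,
      hsum_ite' S (S ∩ T) _ Finset.inter_subset_left, hsum1N, hw1, sub_self]
  · have hlq : l q < 0 := (Finset.mem_filter.mp hq).2
    have hqnST : q ∉ S ∩ T := fun h => hqnT (Finset.mem_inter.mp h).2
    simp only [if_pos hq, if_neg hqnST, sub_zero]
    exact ne_of_gt (div_pos (by linarith) hΛpos)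
end

section
/- Let Δ be a geometric triangulation of a polytope P = conv(V) in ℝ^d, and let Z ⊆ V be a flippable circuit with Δ⁺(Z) ⊆ Δ (the full-dimensional case, |Z| = d+2). Then the triangulation Δ' = (Δ \ Δ⁺(Z)) ∪ Δ⁻(Z) obtained by the bistellar flip is again a geometric triangulation of P: the union of its simplices is P. -/
open Finset

open scoped Classical

variable {d : ℕ}

/-- The Radon point `x = ∑_{p ∈ Z⁺} (λ_p / Λ) p`, where `Λ = ∑_{p ∈ Z⁺} λ_p`. -/
lemma posPart_nonempty (Z : Finset (Fin d → ℝ)) (l : (Fin d → ℝ) → ℝ) (hl : AffDepOn Z l) :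
    (posPart Z l).Nonempty := by
  obtain ⟨hs, hsum, p, hp, hlp⟩ := hl
  by_contra h
  rw [Finset.not_nonempty_iff_eq_empty,
    show posPart Z l = Z.filter (fun p => 0 < l p) from rfl,
    Finset.filter_eq_empty_iff] at h
  push_neg at h
  have hneg : ∀ q ∈ Z, l q ≤ 0 := h
  have hplt : l p < 0 := lt_of_le_of_ne (hneg p hp) hlp
  have : (∑ q ∈ Z, l q) < ∑ q ∈ Z, (0 : ℝ) :=
    Finset.sum_lt_sum hneg ⟨p, hp, hplt⟩
  simp [hsum] at this

lemma union_pos_eq (Z : Finset (Fin d → ℝ)) (l : (Fin d → ℝ) → ℝ) (hl : AffDepOn Z l) :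
    (⋃ p ∈ posPart Z l, convexHull ℝ (↑(Z.erase p) : Set (Fin d → ℝ))) =
      convexHull ℝ (↑Z : Set (Fin d → ℝ)) := by
  have hlne := posPart_nonempty Z l hl
  obtain ⟨hvec, hsum, -⟩ := hl
  apply Set.Subset.antisymm
  · refine Set.iUnion₂_subset fun p _ => convexHull_mono ?_
    exact_mod_cast Finset.erase_subset p Z
  · intro x hx
    rw [Finset.mem_convexHull] at hx
    obtain ⟨w, hw0, hw1, hwx⟩ := hx
    rw [Finset.centerMass_eq_of_sum_1 _ _ hw1] at hwx
    simp only [id] at hwx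
    -- choose minimizer of w p / l p over posPart
    obtain ⟨p₀, hp₀, hmin⟩ :=
      Finset.exists_min_image (posPart Z l) (fun p => w p / l p) hlne
    have hp₀Z : p₀ ∈ Z := (Finset.mem_filter.mp hp₀).1
    have hlp₀ : 0 < l p₀ := (Finset.mem_filter.mp hp₀).2
    set t : ℝ := w p₀ / l p₀ with ht
    have ht0 : 0 ≤ t := div_nonneg (hw0 p₀ hp₀Z) hlp₀.le
    set w' : (Fin d → ℝ) → ℝ := fun y => w y - t * l y with hw'
    have hw'p₀ : w' p₀ = 0 := by
      simp [hw', ht, div_mul_cancel₀ _ hlp₀.ne']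
    have hw'0 : ∀ y ∈ Z, 0 ≤ w' y := by
      intro y hy
      rcases lt_trichotomy (l y) 0 with h | h | h
      · have : t * l y ≤ 0 := mul_nonpos_of_nonneg_of_nonpos ht0 h.le
        simp only [hw']; linarith [hw0 y hy]
      · simp [hw', h, hw0 y hy]
      · have hyp : y ∈ posPart Z l := Finset.mem_filter.mpr ⟨hy, h⟩
        have : t * l y ≤ w y := (le_div_iff₀ h).mp (hmin y hyp)
        simp only [hw']; linarith
    rw [Set.mem_iUnion₂]
    refine ⟨p₀, hp₀, ?_⟩
    rw [Finset.mem_convexHull]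
    refine ⟨w', fun y hy => hw'0 y (Finset.mem_of_mem_erase hy), ?_, ?_⟩
    · rw [Finset.sum_erase _ (by rw [hw'p₀]), ]
      simp only [hw', Finset.sum_sub_distrib, ← Finset.mul_sum, hsum, hw1]
      ring
    · rw [Finset.centerMass_eq_of_sum_1]
      · simp only [id]
        rw [Finset.sum_erase _ (by rw [hw'p₀]; simp)]
        have : ∑ y ∈ Z, w' y • y = ∑ y ∈ Z, (w y • y - t • (l y • y)) := by
          apply Finset.sum_congr rfl; intro y _
          simp [hw', sub_smul, mul_smul]
        rw [this, Finset.sum_sub_distrib, ← Finset.smul_sum, hvec, hwx]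
        simp
      · rw [Finset.sum_erase _ (by rw [hw'p₀])]
        simp only [hw', Finset.sum_sub_distrib, ← Finset.mul_sum, hsum, hw1]
        ring

lemma negPart_eq_posPart_neg (Z : Finset (Fin d → ℝ)) (l : (Fin d → ℝ) → ℝ) :
    negPart Z l = posPart Z (fun p => -(l p)) := by
  ext p
  simp [_root_.negPart, _root_.posPart, neg_pos]

lemma affDepOn_neg (Z : Finset (Fin d → ℝ)) (l : (Fin d → ℝ) → ℝ) (hl : AffDepOn Z l) :
    AffDepOn Z (fun p => -(l p)) := by
  obtain ⟨h1, h2, p, hp, hp'⟩ := hl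
  refine ⟨?_, ?_, p, hp, by simpa using hp'⟩
  · simp [neg_smul, Finset.sum_neg_distrib, h1]
  · simp [Finset.sum_neg_distrib, h2]

lemma union_neg_eq (Z : Finset (Fin d → ℝ)) (l : (Fin d → ℝ) → ℝ) (hl : AffDepOn Z l) :
    (⋃ q ∈ negPart Z l, convexHull ℝ (↑(Z.erase q) : Set (Fin d → ℝ))) =
      convexHull ℝ (↑Z : Set (Fin d → ℝ)) := by
  rw [negPart_eq_posPart_neg]
  exact union_pos_eq Z _ (affDepOn_neg Z l hl)

theorem bistellar_flip_preserves_covering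
    (d : ℕ) (V : Finset (Fin d → ℝ)) (Δ : Finset (Finset (Fin d → ℝ)))
    (hsimp : ∀ S ∈ Δ, S ⊆ V ∧ S.card = d + 1 ∧ ¬ AffDep S)
    (hface : ∀ S ∈ Δ, ∀ T ∈ Δ,
      convexHull ℝ (↑S : Set (Fin d → ℝ)) ∩ convexHull ℝ (↑T : Set (Fin d → ℝ)) =
        convexHull ℝ (↑(S ∩ T) : Set (Fin d → ℝ)))
    (hcover : (⋃ S ∈ Δ, convexHull ℝ (↑S : Set (Fin d → ℝ))) =
        convexHull ℝ (↑V : Set (Fin d → ℝ)))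
    (Z : Finset (Fin d → ℝ)) (hZV : Z ⊆ V) (hZ : IsCircuit Z)
    (hspan : affineSpan ℝ (↑Z : Set (Fin d → ℝ)) = ⊤)
    (l : (Fin d → ℝ) → ℝ) (hl : AffDepOn Z l) (hne : ∀ p ∈ Z, l p ≠ 0)
    (hrealized : (posPart Z l).image (fun p => Z.erase p) ⊆ Δ) :
    (⋃ S ∈ (Δ \ (posPart Z l).image (fun p => Z.erase p)) ∪
        (negPart Z l).image (fun q => Z.erase q),
      convexHull ℝ (↑S : Set (Fin d → ℝ))) =
      convexHull ℝ (↑V : Set (Fin d → ℝ)) := by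
  have hA := union_pos_eq Z l hl
  have hB := union_neg_eq Z l hl
  have h2 : (⋃ S ∈ (negPart Z l).image (fun q => Z.erase q),
      convexHull ℝ (↑S : Set (Fin d → ℝ))) =
      ⋃ q ∈ negPart Z l, convexHull ℝ (↑(Z.erase q) : Set (Fin d → ℝ)) :=
    Finset.set_biUnion_finset_image
  have h3 : (⋃ S ∈ (posPart Z l).image (fun p => Z.erase p),
      convexHull ℝ (↑S : Set (Fin d → ℝ))) =
      ⋃ p ∈ posPart Z l, convexHull ℝ (↑(Z.erase p) : Set (Fin d → ℝ)) :=
    Finset.set_biUnion_finset_image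
  rw [Finset.set_biUnion_union, h2, hB, ← hA, ← h3, ← Finset.set_biUnion_union,
      Finset.sdiff_union_of_subset hrealized, hcover]
end
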